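/- Let f : ℝ → ℝ be Lipschitz with constant K, I = [t₁,t₂] with t₁ = k₁h, t₂ = k₂h for natural numbers k₁ ≤ k₂ and h > 0, and Î = {k₁h, (k₁+1)h, ..., k₂h}. Define g(t) = max_{t' ∈ t ⊕ I} f(t') and ĝ(t) = max_{t' ∈ t ⊕ Î} f(t'). Then |g(t) − ĝ(t)| ≤ Kh/2 for all t. -/

import Mathlib

theorem stmt11 (f : ℝ → ℝ) (K h : ℝ) (hK : 0 ≤ K) (hh : 0 < h)
    (k₁ k₂ : ℕ) (hk : k₁ ≤ k₂)
    (hf : LipschitzWith K.toNNReal f) (t : ℝ) :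
    |sSup (f '' Set.Icc (t + k₁ * h) (t + k₂ * h)) -
      sSup (f '' {x | ∃ j : ℕ, j ≤ k₂ - k₁ ∧ x = t + k₁ * h + j * h})| ≤
      K * h / 2 := by
  set a : ℝ := t + k₁ * h with ha
  set b : ℝ := t + k₂ * h with hb
  set n : ℕ := k₂ - k₁ with hn
  have hab : a ≤ b := by
    have : (k₁ : ℝ) ≤ k₂ := by exact_mod_cast hk
    nlinarith
  have hbn : b = a + n * h := by
    have : (n : ℝ) = (k₂ : ℝ) - k₁ := by
      rw [hn]; push_cast [Nat.cast_sub hk]; ring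
    rw [this]; ring
  set D : Set ℝ := {x | ∃ j : ℕ, j ≤ n ∧ x = a + j * h} with hD
  have hDsub : D ⊆ Set.Icc a b := by
    rintro x ⟨j, hj, rfl⟩
    constructor
    · nlinarith [Nat.cast_nonneg (α := ℝ) j]
    · have : (j : ℝ) ≤ n := by exact_mod_cast hj
      rw [hbn]; nlinarith
  have hIne : (Set.Icc a b).Nonempty := Set.nonempty_Icc.2 hab
  have hDne : D.Nonempty := ⟨a, 0, by simp⟩
  have hbddI : BddAbove (f '' Set.Icc a b) :=
    (isCompact_Icc.image hf.continuous).bddAbove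
  have hbddD : BddAbove (f '' D) := hbddI.mono (Set.image_mono hDsub)
  have hTS : sSup (f '' D) ≤ sSup (f '' Set.Icc a b) :=
    csSup_le_csSup hbddI (hDne.image f) (Set.image_mono hDsub)
  have hST : sSup (f '' Set.Icc a b) ≤ sSup (f '' D) + K * h / 2 := by
    apply csSup_le (hIne.image f)
    rintro y ⟨x, hx, rfl⟩
    set u : ℝ := (x - a) / h with hu
    have hu0 : 0 ≤ u := by
      apply div_nonneg _ hh.le; linarith [hx.1]
    have hun : u ≤ n := by
      rw [hu, div_le_iff₀ hh]
      have := hx.2; rw [hbn] at this; linarith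
    set j : ℕ := ⌊u + 1/2⌋₊ with hj
    have hj1 : (j : ℝ) ≤ u + 1/2 := Nat.floor_le (by linarith)
    have hj2 : u + 1/2 < j + 1 := Nat.lt_floor_add_one _
    have hjn : j ≤ n := by
      have : (j : ℝ) ≤ n + 1/2 := by linarith
      by_contra hc
      push_neg at hc
      have : (n : ℝ) + 1 ≤ j := by exact_mod_cast hc
      linarith
    have hmem : a + j * h ∈ D := ⟨j, hjn, rfl⟩
    have hxu : x = a + u * h := by
      rw [hu]; field_simp; ring
    have hdist : |x - (a + j * h)| ≤ h / 2 := by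
      rw [hxu]
      have : a + u * h - (a + j * h) = (u - j) * h := by ring
      rw [this, abs_mul, abs_of_pos hh]
      have : |u - (j : ℝ)| ≤ 1/2 := abs_le.2 ⟨by linarith, by linarith⟩
      nlinarith
    have hlip : |f x - f (a + j * h)| ≤ K * |x - (a + j * h)| := by
      have := hf.dist_le_mul x (a + j * h)
      rwa [Real.dist_eq, Real.dist_eq, Real.coe_toNNReal K hK] at this
    have hfle : f (a + j * h) ≤ sSup (f '' D) :=
      le_csSup hbddD ⟨_, hmem, rfl⟩
    have h1 : f x ≤ f (a + j * h) + K * (h / 2) := by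
      have h2 : K * |x - (a + j * h)| ≤ K * (h / 2) :=
        mul_le_mul_of_nonneg_left hdist hK
      have := abs_le.1 hlip
      linarith [this.2]
    linarith
  rw [abs_sub_le_iff]
  constructor
  · linarith
  · have : 0 ≤ K * h / 2 := by positivity
    linarith
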